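/- Let T be a connected graded S-ring and P an S-subbimodule such that P^{≤n} := P ∩ T^{≤n} is a direct summand of P^{≤n+1} as an S-bimodule for all n. Then there exists a morphism of filtered S-bimodules α : R_P → T with degree-zero component the inclusion, such that P = α(R_P). -/

import Mathlib

variable {T : Type*} [Ring T]

/-- Projection onto the degree `n` homogeneous component. -/
noncomputable def projFun (𝒜 : ℕ → AddSubgroup T) [GradedRing 𝒜] (n : ℕ) (x : T) : T :=
  (DirectSum.decompose 𝒜 x n : T)

lemma projFun_add (𝒜 : ℕ → AddSubgroup T) [GradedRing 𝒜] (n : ℕ) (x y : T) :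
    projFun 𝒜 n (x + y) = projFun 𝒜 n x + projFun 𝒜 n y := by
  unfold projFun
  rw [DirectSum.decompose_add, DirectSum.add_apply, AddSubgroup.coe_add]

lemma projFun_neg (𝒜 : ℕ → AddSubgroup T) [GradedRing 𝒜] (n : ℕ) (x : T) :
    projFun 𝒜 n (-x) = - projFun 𝒜 n x := by
  unfold projFun
  rw [DirectSum.decompose_neg, DFinsupp.neg_apply, AddSubgroup.coe_neg]

/-- The `S`-subbimodule `T^{≤ n}` of elements of degree at most `n`. -/
noncomputable def degLE (𝒜 : ℕ → AddSubgroup T) [GradedRing 𝒜] (n : ℕ) : AddSubgroup T where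
  carrier := {x | ∀ m, n < m → projFun 𝒜 m x = 0}
  zero_mem' := by
    intro m hm
    unfold projFun
    rw [DirectSum.decompose_zero, DirectSum.zero_apply, AddSubgroup.coe_zero]
  add_mem' := by
    intro a b ha hb m hm
    rw [projFun_add, ha m hm, hb m hm, add_zero]
  neg_mem' := by
    intro a ha m hm
    rw [projFun_neg, ha m hm, neg_zero]

/-- `y` is the leading homogeneous part of `x`. -/
def IsLH (𝒜 : ℕ → AddSubgroup T) [GradedRing 𝒜] (x y : T) : Prop :=
  (x = 0 ∧ y = 0) ∨
    ∃ m, y = projFun 𝒜 m x ∧ y ≠ 0 ∧ ∀ k, m < k → projFun 𝒜 k x = 0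

/-- `LH(X)`, the set of leading homogeneous parts of elements of `X`. -/
def leadSet (𝒜 : ℕ → AddSubgroup T) [GradedRing 𝒜] (X : Set T) : Set T :=
  {y | ∃ x ∈ X, IsLH 𝒜 x y}

/-- An additive subgroup of `T` which is an `S = T^0`-subbimodule. -/
def IsSubbimodule (𝒜 : ℕ → AddSubgroup T) (X : AddSubgroup T) : Prop :=
  ∀ s ∈ 𝒜 0, ∀ x ∈ X, s * x ∈ X ∧ x * s ∈ X

/-- `T` is strongly graded: `T^{n+1} = T^1 T^n`. -/
def StronglyGraded (𝒜 : ℕ → AddSubgroup T) : Prop :=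
  ∀ n, (𝒜 (n + 1) : Set T) ⊆
    ↑(AddSubgroup.closure {y : T | ∃ a ∈ 𝒜 1, ∃ b ∈ 𝒜 n, y = a * b})

/-- `R_X`, the graded subbimodule generated by the leading homogeneous parts of `X`. -/
noncomputable def leadSub (𝒜 : ℕ → AddSubgroup T) [GradedRing 𝒜] (X : Set T) : AddSubgroup T :=
  AddSubgroup.closure (⋃ n, leadSet 𝒜 X ∩ (𝒜 n : Set T))


section Aux

variable (𝒜 : ℕ → AddSubgroup T) [GradedRing 𝒜]

lemma projFun_mem (n : ℕ) (x : T) : projFun 𝒜 n x ∈ 𝒜 n :=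
  (DirectSum.decompose 𝒜 x n).2

lemma projFun_zero (n : ℕ) : projFun 𝒜 n (0 : T) = 0 := by
  unfold projFun
  rw [DirectSum.decompose_zero, DirectSum.zero_apply, AddSubgroup.coe_zero]

lemma projFun_sub (n : ℕ) (x y : T) :
    projFun 𝒜 n (x - y) = projFun 𝒜 n x - projFun 𝒜 n y := by
  rw [sub_eq_add_neg, projFun_add, projFun_neg, ← sub_eq_add_neg]

lemma projFun_same {n : ℕ} {x : T} (h : x ∈ 𝒜 n) : projFun 𝒜 n x = x :=
  DirectSum.decompose_of_mem_same 𝒜 h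

lemma projFun_ne {m n : ℕ} {x : T} (h : x ∈ 𝒜 m) (hmn : m ≠ n) : projFun 𝒜 n x = 0 :=
  DirectSum.decompose_of_mem_ne 𝒜 h hmn

/-- `projFun` as an additive homomorphism. -/
noncomputable def projHom (n : ℕ) : T →+ T :=
  AddMonoidHom.mk' (projFun 𝒜 n) (projFun_add 𝒜 n)

@[simp] lemma projHom_apply (n : ℕ) (x : T) : projHom 𝒜 n x = projFun 𝒜 n x := rfl

lemma projFun_mul_left {s : T} (hs : s ∈ 𝒜 0) (n : ℕ) (x : T) :
    projFun 𝒜 n (s * x) = s * projFun 𝒜 n x := by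
  refine DirectSum.Decomposition.inductionOn 𝒜
    (motive := fun y => projFun 𝒜 n (s * y) = s * projFun 𝒜 n y) ?_ ?_ ?_ x
  · show projFun 𝒜 n (s * 0) = s * projFun 𝒜 n 0
    rw [mul_zero, projFun_zero, mul_zero]
  · rintro i ⟨m, hm⟩
    show projFun 𝒜 n (s * m) = s * projFun 𝒜 n m
    have hsm : s * m ∈ 𝒜 i := by simpa using SetLike.mul_mem_graded hs hm
    by_cases hin : i = n
    · subst hin
      rw [projFun_same 𝒜 hm, projFun_same 𝒜 hsm]
    · rw [projFun_ne 𝒜 hm hin, projFun_ne 𝒜 hsm hin, mul_zero]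
  · intro a b ha hb
    show projFun 𝒜 n (s * (a + b)) = s * projFun 𝒜 n (a + b)
    rw [mul_add, projFun_add, projFun_add, ha, hb, mul_add]

lemma projFun_mul_right {s : T} (hs : s ∈ 𝒜 0) (n : ℕ) (x : T) :
    projFun 𝒜 n (x * s) = projFun 𝒜 n x * s := by
  refine DirectSum.Decomposition.inductionOn 𝒜
    (motive := fun y => projFun 𝒜 n (y * s) = projFun 𝒜 n y * s) ?_ ?_ ?_ x
  · show projFun 𝒜 n (0 * s) = projFun 𝒜 n 0 * s
    rw [zero_mul, projFun_zero, zero_mul]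
  · rintro i ⟨m, hm⟩
    show projFun 𝒜 n (m * s) = projFun 𝒜 n m * s
    have hsm : m * s ∈ 𝒜 i := by simpa using SetLike.mul_mem_graded hm hs
    by_cases hin : i = n
    · subst hin
      rw [projFun_same 𝒜 hm, projFun_same 𝒜 hsm]
    · rw [projFun_ne 𝒜 hm hin, projFun_ne 𝒜 hsm hin, zero_mul]
  · intro a b ha hb
    show projFun 𝒜 n ((a + b) * s) = projFun 𝒜 n (a + b) * s
    rw [add_mul, projFun_add, projFun_add, ha, hb, add_mul]

open Classical in
lemma exists_projFun_finset (x : T) :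
    ∃ s : Finset ℕ, (∀ i ∉ s, projFun 𝒜 i x = 0) ∧ ∑ i ∈ s, projFun 𝒜 i x = x := by
  refine ⟨(DirectSum.decompose 𝒜 x).support, ?_, DirectSum.sum_support_decompose 𝒜 x⟩
  intro i hi
  simp only [projFun, DFinsupp.notMem_support_iff.mp hi, ZeroMemClass.coe_zero]

lemma eq_zero_of_projFun {x : T} (h : ∀ i, projFun 𝒜 i x = 0) : x = 0 := by
  obtain ⟨s, -, hsum⟩ := exists_projFun_finset 𝒜 x
  rw [← hsum]
  exact Finset.sum_eq_zero fun i _ => h i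

lemma mem_degLE_iff {n : ℕ} {x : T} :
    x ∈ degLE 𝒜 n ↔ ∀ m, n < m → projFun 𝒜 m x = 0 := Iff.rfl

lemma mem_degLE_of_mem {n : ℕ} {x : T} (h : x ∈ 𝒜 n) : x ∈ degLE 𝒜 n :=
  (mem_degLE_iff 𝒜).mpr fun m hm => projFun_ne 𝒜 h (Nat.ne_of_lt hm)

lemma degLE_mono {m n : ℕ} (h : m ≤ n) : degLE 𝒜 m ≤ degLE 𝒜 n := by
  intro x hx
  exact (mem_degLE_iff 𝒜).mpr fun k hk => (mem_degLE_iff 𝒜).mp hx k (lt_of_le_of_lt h hk)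

lemma degLE_mul_left {s x : T} {n : ℕ} (hs : s ∈ 𝒜 0) (hx : x ∈ degLE 𝒜 n) :
    s * x ∈ degLE 𝒜 n :=
  (mem_degLE_iff 𝒜).mpr fun m hm => by
    rw [projFun_mul_left 𝒜 hs, (mem_degLE_iff 𝒜).mp hx m hm, mul_zero]

lemma degLE_mul_right {s x : T} {n : ℕ} (hs : s ∈ 𝒜 0) (hx : x ∈ degLE 𝒜 n) :
    x * s ∈ degLE 𝒜 n :=
  (mem_degLE_iff 𝒜).mpr fun m hm => by
    rw [projFun_mul_right 𝒜 hs, (mem_degLE_iff 𝒜).mp hx m hm, zero_mul]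

open Classical in
/-- A choice of preimage in `Q' n` under the degree-`n` projection. -/
noncomputable def sigmaFun (Q' : ℕ → AddSubgroup T) (n : ℕ) (a : T) : T :=
  if h : ∃ q ∈ Q' n, projFun 𝒜 n q = a then h.choose else 0

lemma sigmaFun_spec {Q' : ℕ → AddSubgroup T} {n : ℕ} {a : T}
    (h : ∃ q ∈ Q' n, projFun 𝒜 n q = a) :
    sigmaFun 𝒜 Q' n a ∈ Q' n ∧ projFun 𝒜 n (sigmaFun 𝒜 Q' n a) = a := by
  rw [sigmaFun, dif_pos h]
  exact ⟨h.choose_spec.1, h.choose_spec.2⟩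

open Classical in
/-- The filtered lift `α`. -/
noncomputable def alphaFun (Q' : ℕ → AddSubgroup T) (x : T) : T :=
  ∑ i ∈ (DirectSum.decompose 𝒜 x).support, sigmaFun 𝒜 Q' i (projFun 𝒜 i x)

lemma alphaFun_eq_sum (Q' : ℕ → AddSubgroup T) (h0 : ∀ i, sigmaFun 𝒜 Q' i (0 : T) = 0)
    (x : T) (s : Finset ℕ) (hs : ∀ i ∉ s, projFun 𝒜 i x = 0) :
    alphaFun 𝒜 Q' x = ∑ i ∈ s, sigmaFun 𝒜 Q' i (projFun 𝒜 i x) := by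
  classical
  rw [alphaFun]
  set t := (DirectSum.decompose 𝒜 x).support ∪ s with ht
  have h1 : ∑ i ∈ (DirectSum.decompose 𝒜 x).support, sigmaFun 𝒜 Q' i (projFun 𝒜 i x)
      = ∑ i ∈ t, sigmaFun 𝒜 Q' i (projFun 𝒜 i x) := by
    refine Finset.sum_subset Finset.subset_union_left ?_
    intro i _ hi
    have : projFun 𝒜 i x = 0 := by
      simp only [projFun, DFinsupp.notMem_support_iff.mp hi, ZeroMemClass.coe_zero]
    rw [this, h0]
  have h2 : ∑ i ∈ s, sigmaFun 𝒜 Q' i (projFun 𝒜 i x)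
      = ∑ i ∈ t, sigmaFun 𝒜 Q' i (projFun 𝒜 i x) := by
    refine Finset.sum_subset Finset.subset_union_right ?_
    intro i _ hi
    rw [hs i hi, h0]
  rw [h1, h2]

end Aux

/-- Theorem 2.4: if each `P^{≤n}` is a direct summand of `P^{≤n+1}` as an `S`-bimodule,
then `P = α(R_P)` for some filtered `S`-bimodule map `α : R_P → T` whose degree-zero component
is the inclusion. -/
theorem stmt_7 (𝒜 : ℕ → AddSubgroup T) [GradedRing 𝒜]
    (P : AddSubgroup T) (hP : IsSubbimodule 𝒜 P)
    (hsummand : ∀ n, ∃ Q : AddSubgroup T, IsSubbimodule 𝒜 Q ∧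
      Q ≤ P ⊓ degLE 𝒜 (n + 1) ∧ (P ⊓ degLE 𝒜 n) ⊓ Q = ⊥ ∧
      (P ⊓ degLE 𝒜 n) ⊔ Q = P ⊓ degLE 𝒜 (n + 1)) :
    ∃ α : T → T,
      (∀ r ∈ leadSub 𝒜 (P : Set T), ∀ s ∈ leadSub 𝒜 (P : Set T),
        α (r + s) = α r + α s) ∧
      (∀ s ∈ 𝒜 0, ∀ r ∈ leadSub 𝒜 (P : Set T),
        α (s * r) = s * α r ∧ α (r * s) = α r * s) ∧
      (∀ n, ∀ r ∈ leadSub 𝒜 (P : Set T), r ∈ degLE 𝒜 n → α r ∈ degLE 𝒜 n) ∧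
      (∀ n, ∀ r ∈ leadSub 𝒜 (P : Set T), r ∈ 𝒜 n → projFun 𝒜 n (α r) = r) ∧
      (P : Set T) = α '' (leadSub 𝒜 (P : Set T) : Set T) := by
  classical
  choose Q hQbi hQle hQbot hQsup using hsummand
  -- a uniform family of complements, with `Q' 0 = P ⊓ degLE 0`
  set Q' : ℕ → AddSubgroup T := fun n => Nat.casesOn n (P ⊓ degLE 𝒜 0) Q with hQ'def
  have hQ'le : ∀ n, Q' n ≤ P ⊓ degLE 𝒜 n := by
    intro n
    cases n with
    | zero => exact le_rfl
    | succ m => exact hQle m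
  have hQ'bi : ∀ n, IsSubbimodule 𝒜 (Q' n) := by
    intro n
    cases n with
    | zero =>
      rintro s hs x ⟨hxP, hxD⟩
      exact ⟨⟨(hP s hs x hxP).1, degLE_mul_left 𝒜 hs hxD⟩,
        ⟨(hP s hs x hxP).2, degLE_mul_right 𝒜 hs hxD⟩⟩
    | succ m => exact hQbi m
  -- injectivity of `projFun n` on `Q' n`
  have hinj0 : ∀ n, ∀ q ∈ Q' n, projFun 𝒜 n q = 0 → q = 0 := by
    intro n q hq hpq
    cases n with
    | zero =>
      refine eq_zero_of_projFun 𝒜 ?_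
      intro i
      rcases Nat.eq_zero_or_pos i with h | h
      · rw [h]; exact hpq
      · exact (hQ'le 0 hq).2 i h
    | succ m =>
      have hqm : q ∈ (P ⊓ degLE 𝒜 m) ⊓ Q m := by
        refine ⟨⟨(hQle m hq).1, ?_⟩, hq⟩
        intro k hk
        rcases eq_or_lt_of_le (Nat.succ_le_of_lt hk) with h | h
        · rw [← h]; exact hpq
        · exact (hQle m hq).2 k h
      rw [hQbot m] at hqm
      exact hqm
  have hinj : ∀ n, ∀ q ∈ Q' n, ∀ q' ∈ Q' n,
      projFun 𝒜 n q = projFun 𝒜 n q' → q = q' := by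
    intro n q hq q' hq' h
    have h2 : q - q' = 0 := by
      refine hinj0 n _ (sub_mem hq hq') ?_
      rw [projFun_sub, h, sub_self]
    have := sub_eq_zero.mp h2
    exact this
  -- the image subgroups `B n = projFun n (P ⊓ degLE n)`
  set B : ℕ → AddSubgroup T := fun n => AddSubgroup.map (projHom 𝒜 n) (P ⊓ degLE 𝒜 n)
    with hBdef
  have hBmem : ∀ n a, a ∈ B n ↔ ∃ x ∈ P ⊓ degLE 𝒜 n, projFun 𝒜 n x = a := by
    intro n a
    rw [hBdef]
    exact AddSubgroup.mem_map
  have hBsub : ∀ n, ∀ a ∈ B n, a ∈ 𝒜 n := by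
    intro n a ha
    obtain ⟨x, -, rfl⟩ := (hBmem n a).mp ha
    exact projFun_mem 𝒜 n x
  -- surjectivity of `projFun n : Q' n → B n`
  have hBsurj : ∀ n, ∀ a ∈ B n, ∃ q ∈ Q' n, projFun 𝒜 n q = a := by
    intro n a ha
    obtain ⟨x, hx, rfl⟩ := (hBmem n a).mp ha
    cases n with
    | zero => exact ⟨x, hx, rfl⟩
    | succ m =>
      have hx' : x ∈ (P ⊓ degLE 𝒜 m) ⊔ Q m := by rw [hQsup m]; exact hx
      rw [AddSubgroup.mem_sup] at hx'
      obtain ⟨y, hy, q, hq, rfl⟩ := hx'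
      refine ⟨q, hq, ?_⟩
      rw [projFun_add]
      rw [hy.2 (m + 1) (Nat.lt_succ_self m), zero_add]
  -- the section `σ`
  set σ : ℕ → T → T := sigmaFun 𝒜 Q' with hσdef
  have hσmem : ∀ n, ∀ a ∈ B n, σ n a ∈ Q' n ∧ projFun 𝒜 n (σ n a) = a := by
    intro n a ha
    exact sigmaFun_spec 𝒜 (hBsurj n a ha)
  have hσeq : ∀ n a q, q ∈ Q' n → projFun 𝒜 n q = a → σ n a = q := by
    intro n a q hq ha
    obtain ⟨h1, h2⟩ := sigmaFun_spec 𝒜 ⟨q, hq, ha⟩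
    exact hinj n _ h1 q hq (by rw [h2, ha])
  have hσ0 : ∀ n, σ n (0 : T) = 0 := fun n =>
    hσeq n 0 0 (zero_mem _) (projFun_zero 𝒜 n)
  have hσadd : ∀ n a b, a ∈ B n → b ∈ B n → σ n (a + b) = σ n a + σ n b := by
    intro n a b ha hb
    obtain ⟨hqa, hpa⟩ := hσmem n a ha
    obtain ⟨hqb, hpb⟩ := hσmem n b hb
    refine hσeq n (a + b) _ (add_mem hqa hqb) ?_
    rw [projFun_add, hpa, hpb]
  have hσmull : ∀ n a s, s ∈ 𝒜 0 → a ∈ B n → σ n (s * a) = s * σ n a := by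
    intro n a s hs ha
    obtain ⟨hqa, hpa⟩ := hσmem n a ha
    refine hσeq n (s * a) _ ((hQ'bi n s hs _ hqa).1) ?_
    rw [projFun_mul_left 𝒜 hs, hpa]
  have hσmulr : ∀ n a s, s ∈ 𝒜 0 → a ∈ B n → σ n (a * s) = σ n a * s := by
    intro n a s hs ha
    obtain ⟨hqa, hpa⟩ := hσmem n a ha
    refine hσeq n (a * s) _ ((hQ'bi n s hs _ hqa).2) ?_
    rw [projFun_mul_right 𝒜 hs, hpa]
  -- components of elements of `leadSub` lie in `B`
  have hlead : ∀ x ∈ leadSub 𝒜 (P : Set T), ∀ n, projFun 𝒜 n x ∈ B n := by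
    intro x hx
    refine AddSubgroup.closure_induction ?_ ?_ ?_ ?_ hx
    · rintro g hg n
      obtain ⟨s, ⟨m, rfl⟩, hgs⟩ := hg
      obtain ⟨hglh, hgm⟩ := hgs
      obtain ⟨z, hz, hzg⟩ := hglh
      rcases hzg with ⟨-, rfl⟩ | ⟨k, rfl, hne, htop⟩
      · rw [projFun_zero]; exact zero_mem _
      · have hk : projFun 𝒜 k z ∈ 𝒜 k := projFun_mem 𝒜 k z
        have hkm : k = m := by
          by_contra hcon
          exact hne (by rw [← projFun_same 𝒜 hgm, projFun_ne 𝒜 hk hcon])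
        subst hkm
        by_cases hn : k = n
        · subst hn
          rw [projFun_same 𝒜 hgm]
          exact (hBmem k _).mpr ⟨z, ⟨hz, fun j hj => htop j hj⟩, rfl⟩
        · rw [projFun_ne 𝒜 hgm hn]
          exact zero_mem _
    · intro n
      rw [projFun_zero]
      exact zero_mem _
    · intro a b _ _ ha hb n
      rw [projFun_add]
      exact add_mem (ha n) (hb n)
    · intro a _ ha n
      rw [projFun_neg]
      exact neg_mem (ha n)
  have hBlead : ∀ n, ∀ a ∈ B n, a ∈ leadSub 𝒜 (P : Set T) := by
    intro n a ha
    obtain ⟨x, hx, rfl⟩ := (hBmem n a).mp ha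
    by_cases h : projFun 𝒜 n x = 0
    · rw [h]; exact zero_mem _
    · refine AddSubgroup.subset_closure ?_
      refine Set.mem_iUnion.mpr ⟨n, ?_, projFun_mem 𝒜 n x⟩
      exact ⟨x, hx.1, Or.inr ⟨n, rfl, h, fun k hk => hx.2 k hk⟩⟩
  -- the map α
  set α : T → T := alphaFun 𝒜 Q' with hαdef
  have hα_eq : ∀ (x : T) (s : Finset ℕ), (∀ i ∉ s, projFun 𝒜 i x = 0) →
      α x = ∑ i ∈ s, σ i (projFun 𝒜 i x) :=
    fun x s hs => alphaFun_eq_sum 𝒜 Q' hσ0 x s hs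
  -- α on homogeneous elements
  have hαhom : ∀ n a, a ∈ 𝒜 n → α a = σ n a := by
    intro n a ha
    have h1 : ∀ i ∉ ({n} : Finset ℕ), projFun 𝒜 i a = 0 := by
      intro i hi
      refine projFun_ne 𝒜 ha fun h => hi ?_
      rw [← h]; exact Finset.mem_singleton_self n
    rw [hα_eq a {n} h1, Finset.sum_singleton, projFun_same 𝒜 ha]
  -- additivity on leadSub
  have hadd : ∀ r ∈ leadSub 𝒜 (P : Set T), ∀ s ∈ leadSub 𝒜 (P : Set T),
      α (r + s) = α r + α s := by
    intro r hr s hs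
    obtain ⟨s1, hs1, -⟩ := exists_projFun_finset 𝒜 r
    obtain ⟨s2, hs2, -⟩ := exists_projFun_finset 𝒜 s
    have hrs : ∀ i ∉ s1 ∪ s2, projFun 𝒜 i (r + s) = 0 := by
      intro i hi
      rw [projFun_add, hs1 i (fun h => hi (Finset.mem_union_left _ h)),
        hs2 i (fun h => hi (Finset.mem_union_right _ h)), add_zero]
    rw [hα_eq (r + s) (s1 ∪ s2) hrs,
      hα_eq r (s1 ∪ s2) (fun i hi => hs1 i (fun h => hi (Finset.mem_union_left _ h))),
      hα_eq s (s1 ∪ s2) (fun i hi => hs2 i (fun h => hi (Finset.mem_union_right _ h))),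
      ← Finset.sum_add_distrib]
    refine Finset.sum_congr rfl ?_
    intro i _
    rw [projFun_add, hσadd i _ _ (hlead r hr i) (hlead s hs i)]
  refine ⟨α, hadd, ?_, ?_, ?_, ?_⟩
  · -- bimodule property
    intro s hs r hr
    obtain ⟨s1, hs1, -⟩ := exists_projFun_finset 𝒜 r
    constructor
    · have h1 : ∀ i ∉ s1, projFun 𝒜 i (s * r) = 0 := by
        intro i hi
        rw [projFun_mul_left 𝒜 hs, hs1 i hi, mul_zero]
      rw [hα_eq (s * r) s1 h1, hα_eq r s1 hs1, Finset.mul_sum]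
      refine Finset.sum_congr rfl ?_
      intro i _
      rw [projFun_mul_left 𝒜 hs, hσmull i _ s hs (hlead r hr i)]
    · have h1 : ∀ i ∉ s1, projFun 𝒜 i (r * s) = 0 := by
        intro i hi
        rw [projFun_mul_right 𝒜 hs, hs1 i hi, zero_mul]
      rw [hα_eq (r * s) s1 h1, hα_eq r s1 hs1, Finset.sum_mul]
      refine Finset.sum_congr rfl ?_
      intro i _
      rw [projFun_mul_right 𝒜 hs, hσmulr i _ s hs (hlead r hr i)]
  · -- filtered property
    intro n r hr hrn
    obtain ⟨s1, hs1, -⟩ := exists_projFun_finset 𝒜 r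
    rw [hα_eq r s1 hs1]
    refine sum_mem ?_
    intro i _
    by_cases hin : i ≤ n
    · exact degLE_mono 𝒜 hin ((hQ'le i (hσmem i _ (hlead r hr i)).1).2)
    · rw [(mem_degLE_iff 𝒜).mp hrn i (lt_of_not_ge hin), hσ0]
      exact zero_mem _
  · -- degree-zero component is the inclusion
    intro n r hr hrn
    rw [hαhom n r hrn]
    have hB : r ∈ B n := by
      have h2 := hlead r hr n
      rwa [projFun_same 𝒜 hrn] at h2
    exact (hσmem n r hB).2
  · -- P = α (leadSub)
    have himP : ∀ r ∈ leadSub 𝒜 (P : Set T), α r ∈ P := by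
      intro r hr
      obtain ⟨s1, hs1, -⟩ := exists_projFun_finset 𝒜 r
      rw [hα_eq r s1 hs1]
      refine sum_mem ?_
      intro i _
      exact (hQ'le i (hσmem i _ (hlead r hr i)).1).1
    have hmain : ∀ n, ∀ x ∈ P ⊓ degLE 𝒜 n, ∃ r ∈ leadSub 𝒜 (P : Set T), α r = x := by
      intro n
      induction n with
      | zero =>
        intro x hx
        have ha : projFun 𝒜 0 x ∈ B 0 := (hBmem 0 _).mpr ⟨x, hx, rfl⟩
        refine ⟨projFun 𝒜 0 x, hBlead 0 _ ha, ?_⟩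
        rw [hαhom 0 _ (projFun_mem 𝒜 0 x)]
        exact hσeq 0 _ x hx rfl
      | succ m ih =>
        intro x hx
        have hx' : x ∈ (P ⊓ degLE 𝒜 m) ⊔ Q m := by rw [hQsup m]; exact hx
        rw [AddSubgroup.mem_sup] at hx'
        obtain ⟨y, hy, q, hq, rfl⟩ := hx'
        obtain ⟨r', hr', hry⟩ := ih y hy
        have haB : projFun 𝒜 (m + 1) q ∈ B (m + 1) :=
          (hBmem (m + 1) _).mpr ⟨q, hQle m hq, rfl⟩
        have hαa : α (projFun 𝒜 (m + 1) q) = q := by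
          rw [hαhom (m + 1) _ (projFun_mem 𝒜 (m + 1) q)]
          exact hσeq (m + 1) _ q hq rfl
        refine ⟨r' + projFun 𝒜 (m + 1) q,
          add_mem hr' (hBlead (m + 1) _ haB), ?_⟩
        rw [hadd r' hr' _ (hBlead (m + 1) _ haB), hry, hαa]
    refine Set.Subset.antisymm ?_ ?_
    · intro x hx
      obtain ⟨s1, hs1, -⟩ := exists_projFun_finset 𝒜 x
      have hxd : x ∈ degLE 𝒜 (s1.sup id) := by
        refine (mem_degLE_iff 𝒜).mpr ?_
        intro m hm
        refine hs1 m fun hmem => ?_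
        exact absurd (Finset.le_sup (f := id) hmem) (not_le.mpr hm)
      obtain ⟨r, hr, hαr⟩ := hmain (s1.sup id) x ⟨hx, hxd⟩
      exact ⟨r, hr, hαr⟩
    · rintro y ⟨r, hr, rfl⟩
      exact himP r hr
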